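/- Fix θ0 ∈ (0, 1) and a positive integer n. The function φ(θ) = [−n·log(1−θ) + n·log(1−θ0)] / [ (log θ − log(1−θ)) − (log θ0 − log(1−θ0)) ], defined for θ ∈ (0, 1) with θ ≠ θ0, is strictly monotone increasing on (0, 1) \ {θ0}. -/

import Mathlib

open Real Set

private lemma g_deriv (n : ℕ) (x : ℝ) :
    HasDerivAt (fun x : ℝ => (n : ℝ) * Real.log (1 + Real.exp x))
      ((n : ℝ) * (Real.exp x / (1 + Real.exp x))) x := by
  have h1 : (0:ℝ) < 1 + Real.exp x := by positivity
  have h2 : HasDerivAt (fun x : ℝ => 1 + Real.exp x) (Real.exp x) x :=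
    (Real.hasDerivAt_exp x).const_add 1
  have h3 := (Real.hasDerivAt_log h1.ne').comp x h2
  have := h3.const_mul (n : ℝ)
  exact this.congr_deriv (by ring)

private lemma g_strictConvex (n : ℕ) (hn : 0 < n) :
    StrictConvexOn ℝ Set.univ (fun x : ℝ => (n : ℝ) * Real.log (1 + Real.exp x)) := by
  apply strictConvexOn_univ_of_deriv2_pos
  · have : Continuous fun x : ℝ => 1 + Real.exp x := by continuity
    exact continuous_const.mul (this.log (fun x => by positivity))
  · intro x
    have hderiv : deriv (fun x : ℝ => (n : ℝ) * Real.log (1 + Real.exp x))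
        = fun x => (n : ℝ) * (Real.exp x / (1 + Real.exp x)) := by
      ext y; exact (g_deriv n y).deriv
    have hd2 : HasDerivAt (fun x : ℝ => (n : ℝ) * (Real.exp x / (1 + Real.exp x)))
        ((n : ℝ) * (Real.exp x / (1 + Real.exp x) ^ 2)) x := by
      have h1 : (0:ℝ) < 1 + Real.exp x := by positivity
      have h2 : HasDerivAt (fun x : ℝ => 1 + Real.exp x) (Real.exp x) x :=
        (Real.hasDerivAt_exp x).const_add 1
      have h3 := ((Real.hasDerivAt_exp x).div h2 h1.ne').const_mul (n : ℝ)
      exact h3.congr_deriv (by ring)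
    simp only [Function.iterate_succ, Function.iterate_zero, Function.comp_apply, id_eq]
    rw [hderiv, hd2.deriv]
    have h1 : (0:ℝ) < 1 + Real.exp x := by positivity
    have := Real.exp_pos x
    have hn' : (0:ℝ) < n := by exact_mod_cast hn
    positivity

private lemma g_eq (n : ℕ) {θ : ℝ} (h0 : 0 < θ) (h1 : θ < 1) :
    (n : ℝ) * Real.log (1 + Real.exp (Real.log θ - Real.log (1 - θ)))
      = -(n : ℝ) * Real.log (1 - θ) := by
  have h1' : (0:ℝ) < 1 - θ := by linarith
  have hexp : Real.exp (Real.log θ - Real.log (1 - θ)) = θ / (1 - θ) := by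
    rw [Real.exp_sub, Real.exp_log h0, Real.exp_log h1']
  rw [hexp]
  have : 1 + θ / (1 - θ) = (1 - θ)⁻¹ := by field_simp; ring
  rw [this, Real.log_inv]
  ring

theorem binomial_ratio_strictMono (θ0 : ℝ) (hθ0 : θ0 ∈ Set.Ioo (0 : ℝ) 1)
    (n : ℕ) (hn : 0 < n) :
    StrictMonoOn
      (fun θ : ℝ => (-(n : ℝ) * Real.log (1 - θ) + (n : ℝ) * Real.log (1 - θ0))
        / ((Real.log θ - Real.log (1 - θ)) - (Real.log θ0 - Real.log (1 - θ0))))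
      {θ : ℝ | 0 < θ ∧ θ < 1 ∧ θ ≠ θ0} := by
  obtain ⟨h00, h01⟩ := hθ0
  set L : ℝ → ℝ := fun θ => Real.log θ - Real.log (1 - θ) with hL
  have hLmono : StrictMonoOn L (Set.Ioo 0 1) := by
    intro a ha b hb hab
    have : Real.log a < Real.log b := Real.log_lt_log ha.1 hab
    have : Real.log (1 - b) < Real.log (1 - a) :=
      Real.log_lt_log (by linarith [hb.2]) (by linarith)
    simp only [hL]
    linarith [Real.log_lt_log ha.1 hab]
  intro θ1 hθ1 θ2 hθ2 h12
  obtain ⟨h10, h11, h1ne⟩ := hθ1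
  obtain ⟨h20, h21, h2ne⟩ := hθ2
  have hmem1 : θ1 ∈ Set.Ioo (0:ℝ) 1 := ⟨h10, h11⟩
  have hmem2 : θ2 ∈ Set.Ioo (0:ℝ) 1 := ⟨h20, h21⟩
  have hmem0 : θ0 ∈ Set.Ioo (0:ℝ) 1 := ⟨h00, h01⟩
  have hLinj := hLmono.injOn
  have hne1 : L θ1 ≠ L θ0 := fun h => h1ne (hLinj hmem1 hmem0 h)
  have hne2 : L θ2 ≠ L θ0 := fun h => h2ne (hLinj hmem2 hmem0 h)
  have hlt : L θ1 < L θ2 := hLmono hmem1 hmem2 h12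
  have key := (g_strictConvex n hn).secant_strict_mono (a := L θ0)
    (Set.mem_univ _) (Set.mem_univ _) (Set.mem_univ _) hne1 hne2 hlt
  simp only [hL] at key
  rw [g_eq n h10 h11, g_eq n h20 h21, g_eq n h00 h01] at key
  simp only
  convert key using 2 <;> ring
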